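/- arXiv:2212.02150 — 2 statements merged into one kernel-verified Lean document; each statement's English description precedes it below -/
import Mathlib

section
/- Let ∂ be a generator and x_1, …, x_m ∈ X with m ≥ 2. Then μ ∈ N satisfies ∂(μ + δ_{x_i}) = ∂(μ + δ_{x_i} + δ_{x_{i+1}}) for all i = 1, …, m (indices cyclic, so x_{m+1} = x_1) if and only if ∂(μ + δ_{x_1}) = ⋯ = ∂(μ + δ_{x_m}) = ∂μ. -/
/-- The Dirac counting measure at a point, in the model of counting measures
on `X` as functions `X → ℕ` (pointwise order and addition). -/
noncomputable def delta {X : Type*} (x : X) : X → ℕ := Set.indicator {x} 1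

/-- A generator: a map on counting measures satisfying (H1) thinning, (H2) additivity,
(H3) idempotency and (H4) consistency. -/
def IsGenerator {X : Type*} (D : (X → ℕ) → (X → ℕ)) : Prop :=
  (∀ μ, D μ ≤ μ) ∧
  (∀ μ x, D μ x ≠ 0 → D (μ + delta x) = D μ + delta x) ∧
  (∀ μ μ' : X → ℕ, μ' ≤ μ - D μ → D (D μ + μ') = D μ) ∧
  (∀ μ μ' ψ : X → ℕ, μ' ≤ μ → D μ = D μ' → D (μ + ψ) = D (μ' + ψ))

/-- The hull operator associated with a generator. -/
def hull {X : Type*} (D : (X → ℕ) → (X → ℕ)) (μ : X → ℕ) : Set X :=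
  {x | D (μ + delta x) = D μ}

open scoped Classical

/-- The indicator `H_x(μ) = 1{∂(μ + δ_x) ≠ ∂μ}`, as a real number. -/
noncomputable def Hf {X : Type*} (D : (X → ℕ) → (X → ℕ)) (x : X) (μ : X → ℕ) : ℝ :=
  if D (μ + delta x) = D μ then 0 else 1

lemma delta_apply {X : Type*} (x y : X) [Decidable (y = x)] :
    delta x y = if y = x then 1 else 0 := by
  simp [delta, Set.indicator_apply]

lemma delta_self {X : Type*} (x : X) : delta x x = 1 := by
  classical simp [delta_apply]

open Fin.NatCast
open Fin.CommRing

/-- cyclic lemma. For `m ≥ 2` points `x_1, …, x_m`,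
`∂(μ + δ_{x_i}) = ∂(μ + δ_{x_i} + δ_{x_{i+1}})` holds for all `i` (cyclically) iff
`∂(μ + δ_{x_i}) = ∂μ` for all `i`. -/
theorem cyclic_lemma {X : Type*} (D : (X → ℕ) → (X → ℕ))
    (hD : IsGenerator D) (m : ℕ) [NeZero m] (hm : 2 ≤ m)
    (x : Fin m → X) (μ : X → ℕ) :
    (∀ i : Fin m, D (μ + delta (x i)) = D (μ + delta (x i) + delta (x (i + 1)))) ↔
      (∀ i : Fin m, D (μ + delta (x i)) = D μ) := by
  obtain ⟨h1, h2, h3, h4⟩ := hD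
  constructor
  · intro h
    -- chain: D(μ + sum of k+1 consecutive deltas starting at i) = D(μ + δ_{x_i})
    have chain : ∀ (i : Fin m) (k : ℕ),
        D (μ + ∑ t ∈ Finset.range (k+1), delta (x (i + (t : Fin m))))
          = D (μ + delta (x i)) := by
      intro i k
      induction k with
      | zero => simp
      | succ k ih =>
        have hcast : i + ((k : ℕ) : Fin m) + 1 = i + (((k+1 : ℕ)) : Fin m) := by
          push_cast; ring
        have hkey := h (i + ((k : ℕ) : Fin m))
        rw [hcast] at hkey
        have step := h4
          (μ + delta (x (i + ((k : ℕ) : Fin m))) + delta (x (i + (((k+1 : ℕ)) : Fin m))))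
          (μ + delta (x (i + ((k : ℕ) : Fin m))))
          (∑ t ∈ Finset.range k, delta (x (i + (t : Fin m))))
          (by intro y; exact Nat.le_add_right _ _) hkey.symm
        have e1 : μ + delta (x (i + ((k : ℕ) : Fin m)))
            + delta (x (i + (((k+1 : ℕ)) : Fin m)))
            + ∑ t ∈ Finset.range k, delta (x (i + (t : Fin m)))
            = μ + ∑ t ∈ Finset.range (k+1+1), delta (x (i + (t : Fin m))) := by
          rw [Finset.sum_range_succ, Finset.sum_range_succ]; ring
        have e2 : μ + delta (x (i + ((k : ℕ) : Fin m)))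
            + ∑ t ∈ Finset.range k, delta (x (i + (t : Fin m)))
            = μ + ∑ t ∈ Finset.range (k+1), delta (x (i + (t : Fin m))) := by
          rw [Finset.sum_range_succ]; ring
        rw [e1, e2] at step
        rw [step, ih]
    -- total sum independent of starting point
    have hS : ∀ i : Fin m, ∑ t ∈ Finset.range m, delta (x (i + (t : Fin m)))
        = ∑ j : Fin m, delta (x j) := by
      intro i
      rw [← Fin.sum_univ_eq_sum_range (fun t => delta (x (i + (t : Fin m)))) m]
      simp only [Fin.cast_val_eq_self]
      exact Fintype.sum_equiv (Equiv.addLeft i) _ _ (fun j => rfl)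
    have main : ∀ i : Fin m, D (μ + delta (x i)) = D (μ + ∑ j : Fin m, delta (x j)) := by
      intro i
      have := chain i (m - 1)
      rw [Nat.sub_add_cancel (by omega : 1 ≤ m), hS i] at this
      exact this.symm
    have hall : ∀ i : Fin m, D (μ + delta (x i)) = D (μ + delta (x 0)) := by
      intro i; rw [main i, main 0]
    set ν := D (μ + delta (x 0)) with hν
    -- ν ≤ μ
    have hle : ν ≤ μ := by
      intro y
      by_contra hy
      replace hy : μ y < ν y := Nat.lt_of_not_le hy
      have hxj : ∀ j : Fin m, x j = y := by
        intro j
        have hb := h1 (μ + delta (x j)) y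
        rw [hall j] at hb
        by_contra hne
        classical
        simp only [Pi.add_apply] at hb
        rw [delta_apply, if_neg (fun hyx => hne hyx.symm)] at hb
        omega
      have h0 := h 0
      rw [hxj 0, hxj (0 + 1)] at h0
      have hν0 : ν = D (μ + delta y) := by rw [hν, hxj 0]
      have hne0 : D (μ + delta y) y ≠ 0 := by rw [← hν0]; omega
      have h2' := h2 (μ + delta y) y hne0
      rw [← h0, ← hν0] at h2'
      have := congrFun h2' y
      simp [delta_self] at this
    -- D μ = ν via H3
    have hDμ : D μ = ν := by
      have hsub : μ - ν ≤ (μ + delta (x 0)) - D (μ + delta (x 0)) := by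
        rw [← hν]
        intro y
        simp only [Pi.sub_apply, Pi.add_apply]
        have h5 : ν y ≤ μ y := hle y
        omega
      have h3' := h3 (μ + delta (x 0)) (μ - ν) hsub
      rw [← hν] at h3'
      have hrw : ν + (μ - ν) = μ := by
        funext y
        simp only [Pi.add_apply, Pi.sub_apply]
        have h5 : ν y ≤ μ y := hle y
        omega
      rw [hrw] at h3'
      exact h3'
    intro i
    rw [hall i, hDμ]
  · intro h i
    have step := h4 (μ + delta (x (i+1))) μ (delta (x i))
      (by intro y; exact Nat.le_add_right _ _) (h (i+1))
    have e : μ + delta (x (i+1)) + delta (x i) = μ + delta (x i) + delta (x (i+1)) := by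
      ring
    rw [e] at step
    rw [step]
end

section
/- Let ∂ be a generator with indicator H_x(μ) = 1{∂(μ + δ_x) ≠ ∂μ} and difference operator D_x G(μ) = G(μ + δ_x) − G(μ). Then for every m ≥ 2, all z_1, …, z_m ∈ X and μ ∈ N, the cyclic product vanishes: D_{z_1}H_{z_2}(μ) · D_{z_2}H_{z_3}(μ) ⋯ D_{z_m}H_{z_1}(μ) = 0. -/
open scoped Classical

section Aux
variable {X : Type*} {D : (X → ℕ) → (X → ℕ)}

lemma delta_apply_self (x : X) : delta x x = 1 := by simp [delta]

lemma delta_apply_ne {x y : X} (h : y ≠ x) : delta x y = 0 := by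
  simp [delta, Set.indicator_of_notMem, h]

lemma add_delta_ne (f : X → ℕ) (x : X) : f + delta x ≠ f := fun h => by
  have := congrFun h x
  simp [delta_apply_self] at this

lemma gen_eq_of_between (hD : IsGenerator D) {ν ρ : X → ℕ}
    (h1 : D ν ≤ ρ) (h2 : ρ ≤ ν) : D ρ = D ν := by
  have h3 : ρ - D ν ≤ ν - D ν := fun y => by
    simp only [Pi.sub_apply]; exact Nat.sub_le_sub_right (h2 y) _
  have h5 := hD.2.2.1 ν (ρ - D ν) h3
  have h4 : D ν + (ρ - D ν) = ρ := funext fun y => by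
    simp only [Pi.add_apply, Pi.sub_apply]; exact Nat.add_sub_cancel' (h1 y)
  rwa [h4] at h5

lemma hull_mono (hD : IsGenerator D) {μ : X → ℕ} {a b : X}
    (h : D (μ + delta b) = D μ) : D (μ + delta a + delta b) = D (μ + delta a) := by
  have h2 := hD.2.2.2 (μ + delta b) μ (delta a) le_self_add h
  rwa [show μ + delta b + delta a = μ + delta a + delta b by ring] at h2

lemma factor_ne_zero (hD : IsGenerator D) {μ : X → ℕ} {a b : X}
    (h : Hf D b (μ + delta a) - Hf D b μ ≠ 0) :
    D (μ + delta a + delta b) = D (μ + delta a) ∧ D (μ + delta b) ≠ D μ := by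
  by_cases h1 : D (μ + delta b) = D μ
  · exfalso
    apply h
    rw [Hf, Hf, if_pos h1, if_pos (hull_mono hD h1), sub_zero]
  · refine ⟨?_, h1⟩
    by_contra h2
    apply h
    rw [Hf, Hf, if_neg h2, if_neg h1, sub_self]

end Aux


/-- the cyclic product of first-order differences vanishes:
`D_{z_1}H_{z_2}(μ) ⋯ D_{z_m}H_{z_1}(μ) = 0` for `m ≥ 2`. -/
theorem cyclic_product_vanishes {X : Type*} (D : (X → ℕ) → (X → ℕ))
    (hD : IsGenerator D) (m : ℕ) [NeZero m] (hm : 2 ≤ m)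
    (z : Fin m → X) (μ : X → ℕ) :
    ∏ i : Fin m, (Hf D (z (i + 1)) (μ + delta (z i)) - Hf D (z (i + 1)) μ) = 0 := by
  obtain ⟨n, rfl⟩ : ∃ n, m = n + 2 := ⟨m - 2, by omega⟩
  by_contra hne
  have hfac : ∀ i : Fin (n + 2), Hf D (z (i+1)) (μ + delta (z i)) - Hf D (z (i+1)) μ ≠ 0 :=
    fun i hi => hne (Finset.prod_eq_zero (Finset.mem_univ i) hi)
  have hone : ∀ i : Fin (n + 2), i + 1 ≠ i := by
    intro i h
    have h2 : (1 : Fin (n + 2)) = 0 := by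
      have := congrArg (· - i) h
      simpa [add_sub_cancel_right, sub_self] using this
    exact one_ne_zero h2
  set ν : X → ℕ := μ + ∑ k, delta (z k) with hν
  have hstep : ∀ i : Fin (n + 2),
      D ν = D (μ + ∑ k ∈ Finset.univ.erase (i+1), delta (z k)) := by
    intro i
    obtain ⟨hA, _⟩ := factor_ne_zero hD (hfac i)
    have hii : i ∈ Finset.univ.erase (i+1) :=
      Finset.mem_erase.2 ⟨fun h => hone i h.symm, Finset.mem_univ i⟩
    set s := (Finset.univ.erase (i+1)).erase i with hs
    have hs1 : ∑ k ∈ Finset.univ.erase (i+1), delta (z k)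
        = ∑ k ∈ s, delta (z k) + delta (z i) := (Finset.sum_erase_add _ _ hii).symm
    have hs2 : (∑ k, delta (z k))
        = (∑ k ∈ Finset.univ.erase (i+1), delta (z k)) + delta (z (i+1)) :=
      (Finset.sum_erase_add _ _ (Finset.mem_univ _)).symm
    have key := hD.2.2.2 (μ + delta (z i) + delta (z (i+1))) (μ + delta (z i))
        (∑ k ∈ s, delta (z k)) le_self_add hA
    have e1 : ν = μ + delta (z i) + delta (z (i+1)) + ∑ k ∈ s, delta (z k) := by
      rw [hν, hs2, hs1]; ring
    have e2 : μ + ∑ k ∈ Finset.univ.erase (i+1), delta (z k)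
        = μ + delta (z i) + ∑ k ∈ s, delta (z k) := by
      rw [hs1]; ring
    rw [e1, e2]; exact key
  have hstep' : ∀ j : Fin (n + 2),
      D ν = D (μ + ∑ k ∈ Finset.univ.erase j, delta (z k)) := by
    intro j
    have := hstep (j - 1)
    rwa [sub_add_cancel] at this
  have hzero : ∀ j : Fin (n + 2), D ν (z j) = 0 := by
    intro j
    set νj : X → ℕ := μ + ∑ k ∈ Finset.univ.erase j, delta (z k) with hνj
    have hj : νj + delta (z j) = ν := by
      rw [hν, hνj, add_assoc, Finset.sum_erase_add _ _ (Finset.mem_univ j)]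
    by_contra h0
    have h0' : D νj (z j) ≠ 0 := by rw [← hstep' j]; exact h0
    have h2 := hD.2.1 νj (z j) h0'
    rw [hj, ← hstep' j] at h2
    have : D ν + delta (z j) = D ν := by rw [← h2, hstep' j]
    exact add_delta_ne _ _ this
  have hle : D ν ≤ μ := by
    intro y
    by_cases hy : ∃ j, z j = y
    · obtain ⟨j, rfl⟩ := hy
      rw [hzero j]; exact Nat.zero_le _
    · have hys : ν y = μ y := by
        rw [hν, Pi.add_apply, Finset.sum_apply]
        rw [Finset.sum_eq_zero fun k _ => delta_apply_ne fun h => hy ⟨k, h.symm⟩, add_zero]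
      calc D ν y ≤ ν y := hD.1 ν y
        _ = μ y := hys
  have hμν : D μ = D ν := gen_eq_of_between hD hle le_self_add
  have h1ν : D (μ + delta (z 1)) = D ν := by
    refine gen_eq_of_between hD (le_trans hle le_self_add) ?_
    refine add_le_add_right ?_ μ
    exact Finset.single_le_sum (f := fun k => delta (z k))
      (fun k _ => by intro y; exact Nat.zero_le _) (Finset.mem_univ 1)
  have hcontra := (factor_ne_zero hD (hfac 0)).2
  rw [zero_add] at hcontra
  exact hcontra (h1ν.trans hμν.symm)
end
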